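/- arXiv:2508.18286 — 2 statements merged into one kernel-verified Lean document; each statement's English description precedes it below -/
import Mathlib

section
/- Define b(n) by ∑_{n≥0} b(n) q^n = f_2^3/f_1. Then for all n ≥ 0, b(11n+25) = −b(n/11), where b(n/11) is interpreted as 0 when 11 does not divide n. -/
open Finset PowerSeries Polynomial

set_option maxHeartbeats 1600000
set_option maxRecDepth 8000

noncomputable section AuxJTP

abbrev PS := PowerSeries ℤ
abbrev XX : PS := PowerSeries.X

/-- Gaussian binomial in base `X^s`, defined by Pascal's rule. -/
def qb (s : ℕ) : ℕ → ℕ → PS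
  | 0, 0 => 1
  | 0, _+1 => 0
  | _+1, 0 => 1
  | m+1, k+1 => qb s m (k+1) + XX ^ (s*(m-k)) * qb s m k

lemma qb_succ_succ (s m k : ℕ) :
    qb s (m+1) (k+1) = qb s m (k+1) + XX ^ (s*(m-k)) * qb s m k := rfl

@[simp] lemma qb_zero_right (s m : ℕ) : qb s m 0 = 1 := by
  cases m <;> rfl

lemma qb_eq_zero (s : ℕ) {m k : ℕ} (h : m < k) : qb s m k = 0 := by
  induction m generalizing k with
  | zero => obtain ⟨k, rfl⟩ := Nat.exists_eq_add_of_lt h; simp [qb, Nat.add_comm]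
  | succ m ih =>
    obtain ⟨k, rfl⟩ : ∃ j, k = j + 1 := ⟨k - 1, by omega⟩
    rw [qb_succ_succ, ih (by omega), ih (by omega)]
    ring

lemma qb_diag (s m : ℕ) : qb s m m = 1 := by
  induction m with
  | zero => rfl
  | succ m ih => rw [qb_succ_succ, qb_eq_zero s (by omega), ih]; simp

/-- `gs s b = ∏_{k=1}^{b} (1 - X^{s k})`. -/
def gs (s b : ℕ) : PS := ∏ k ∈ Ioc 0 b, (1 - XX ^ (s*k))

@[simp] lemma gs_zero (s : ℕ) : gs s 0 = 1 := by simp [gs]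

lemma gs_def (s b : ℕ) : gs s b = ∏ k ∈ Ioc 0 b, (1 - XX ^ (s*k)) := rfl

lemma gs_succ (s b : ℕ) : gs s (b+1) = gs s b * (1 - XX ^ (s*(b+1))) := by
  rw [gs, gs, prod_Ioc_succ_top (Nat.zero_le _)]

/-- key product identity: `qb (a+b) b * gs b = ∏_{k=a+1}^{a+b} (1 - X^{sk})`. -/
lemma qb_mul_gs (s : ℕ) : ∀ a b : ℕ, qb s (a+b) b * gs s b = ∏ k ∈ Ioc a (a+b), (1 - XX ^ (s*k)) := by
  suffices H : ∀ n a b, a + b = n → qb s (a+b) b * gs s b = ∏ k ∈ Ioc a (a+b), (1 - XX ^ (s*k)) by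
    intro a b; exact H (a+b) a b rfl
  intro n
  induction n using Nat.strong_induction_on with
  | _ n ih =>
  intro a b h
  match a, b with
  | a, 0 => simp
  | 0, b+1 => rw [Nat.zero_add, qb_diag, one_mul, gs]
  | a+1, b+1 =>
      have hq := qb_succ_succ s (a+b+1) b
      rw [show a+b+1-b = a+1 from by omega] at hq
      have e1 := ih (a+b+1) (by omega) a (b+1) (by omega)
      have e2 := ih (a+b+1) (by omega) (a+1) b (by omega)
      simp only [show a+(b+1) = a+b+1 from by omega, show (a+1)+b = a+b+1 from by omega,
                 show (a+1)+(b+1) = a+b+1+1 from by omega] at e1 e2 ⊢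
      have hsplit : ∏ k ∈ Ioc a (a+b+1), (1 - XX^(s*k)) =
          (1 - XX^(s*(a+1))) * ∏ k ∈ Ioc (a+1) (a+b+1), (1 - XX^(s*k)) := by
        rw [← Finset.prod_Ioc_consecutive _ (show a ≤ a+1 by omega) (show a+1 ≤ a+b+1 by omega)]
        congr 1
        rw [show Ioc a (a+1) = {a+1} from by ext x; simp only [mem_Ioc, mem_singleton]; omega]
        simp
      have htop : ∏ k ∈ Ioc (a+1) (a+b+1+1), (1 - XX^(s*k)) =
          (∏ k ∈ Ioc (a+1) (a+b+1), (1 - XX^(s*k))) * (1 - XX^(s*(a+b+1+1))) := by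
        rw [prod_Ioc_succ_top (by omega)]
      rw [hq, htop, gs_succ]
      rw [hsplit, gs_succ] at e1
      have hxp : (XX:PS)^(s*(a+1)) * XX^(s*(b+1)) = XX^(s*(a+b+1+1)) := by
        rw [← pow_add]; congr 1; ring
      linear_combination e1 + XX^(s*(a+1)) * (1 - XX^(s*(b+1))) * e2
        - (∏ k ∈ Ioc (a+1) (a+b+1), (1 - XX ^ (s*k))) * hxp

lemma gs_ne_zero (s b : ℕ) (hs : 1 ≤ s) : gs s b ≠ 0 := by
  have h1 : PowerSeries.constantCoeff (gs s b) = 1 := by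
    rw [gs, map_prod]
    rw [Finset.prod_eq_one]
    intro k hk
    simp only [map_sub, map_one, map_pow, constantCoeff_X]
    simp only [mem_Ioc] at hk
    rw [zero_pow (Nat.mul_ne_zero (by omega) (by omega)), sub_zero]
  intro h; rw [h] at h1; simp at h1

/-- symmetry of the Gaussian binomial. -/
lemma qb_symm (s : ℕ) (hs : 1 ≤ s) (m k : ℕ) (hk : k ≤ m) : qb s m k = qb s m (m-k) := by
  have h1 := qb_mul_gs s (m-k) k
  have h2 := qb_mul_gs s k (m-k)
  rw [show m-k+k = m from by omega] at h1
  rw [show k+(m-k) = m from by omega] at h2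
  have hA : gs s (m-k) * ∏ j ∈ Ioc (m-k) m, (1 - XX ^ (s*j)) = gs s m :=
    Finset.prod_Ioc_consecutive _ (Nat.zero_le _) (by omega)
  have hB : gs s k * ∏ j ∈ Ioc k m, (1 - XX ^ (s*j)) = gs s m :=
    Finset.prod_Ioc_consecutive _ (Nat.zero_le _) (by omega)
  have E1 : qb s m k * (gs s k * gs s (m-k)) = gs s m := by
    rw [← mul_assoc, h1, mul_comm, hA]
  have E2 : qb s m (m-k) * (gs s k * gs s (m-k)) = gs s m := by
    rw [show qb s m (m-k) * (gs s k * gs s (m-k)) = qb s m (m-k) * gs s (m-k) * gs s k from by ring,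
        h2, mul_comm, hB]
  exact mul_right_cancel₀ (mul_ne_zero (gs_ne_zero s k hs) (gs_ne_zero s (m-k) hs))
    (E1.trans E2.symm)




variable {s : ℕ} (hs : 1 ≤ s)

lemma qb_pascalB (s : ℕ) (hs : 1 ≤ s) (m k : ℕ) :
    qb s (m+1) (k+1) = XX ^ (s*(k+1)) * qb s m (k+1) + qb s m k := by
  rcases lt_trichotomy k m with h | rfl | h
  · rw [qb_symm s hs (m+1) (k+1) (by omega),
        show m+1-(k+1) = (m-k-1)+1 from by omega, qb_succ_succ,
        show m-(m-k-1) = k+1 from by omega,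
        show m-k-1+1 = m-k from by omega,
        show m-k-1 = m-(k+1) from by omega,
        ← qb_symm s hs m k (by omega),
        ← qb_symm s hs m (k+1) (by omega)]
    ring
  · rw [qb_diag, qb_eq_zero s (by omega), qb_diag]; ring
  · rw [qb_eq_zero s (by omega), qb_eq_zero s (by omega), qb_eq_zero s (by omega)]; ring

/-- composite Pascal rule, in multiplied (subtraction-free) form. -/
lemma qb_comp (s : ℕ) (hs : 1 ≤ s) (n i : ℕ) :
    XX^(s*(i+2)) * qb s (2*n+2) (i+2) =
      XX^(2*(s*(i+2))) * qb s (2*n) (i+2)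
      + XX^(s*(i+2)) * (1 + XX^(s*(2*n+1))) * qb s (2*n) (i+1)
      + XX^(s*(2*n+2)) * qb s (2*n) i := by
  have h0 : qb s (2*n+2) (i+2) = qb s (2*n+1) (i+2) + XX^(s*(2*n-i)) * qb s (2*n+1) (i+1) := by
    have := qb_succ_succ s (2*n+1) (i+1)
    rw [show 2*n+1-(i+1) = 2*n-i from by omega] at this
    exact this
  have h1 : qb s (2*n+1) (i+2) = XX^(s*(i+2)) * qb s (2*n) (i+2) + qb s (2*n) (i+1) :=
    qb_pascalB s hs (2*n) (i+1)
  have h2 := qb_pascalB s hs (2*n) i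
  rcases le_or_gt i (2*n) with hi | hi
  · have hx1 : (XX:PS)^(s*(i+2)) * XX^(s*(2*n-i)) = XX^(s*(2*n+2)) := by
      rw [← pow_add, ← Nat.mul_add, show (i+2)+(2*n-i) = 2*n+2 from by omega]
    have hx2 : (XX:PS)^(s*(2*n-i)) * XX^(s*(i+1)) = XX^(s*(2*n+1)) := by
      rw [← pow_add, ← Nat.mul_add, show (2*n-i)+(i+1) = 2*n+1 from by omega]
    have hx3 : (XX:PS)^(2*(s*(i+2))) = XX^(s*(i+2)) * XX^(s*(i+2)) := by
      rw [← pow_add]; congr 1; ring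
    have hx4 : (XX:PS)^(s*i) * XX^(s*(2*n-i)) = XX^(s*(2*n)) := by
      rw [← pow_add, ← Nat.mul_add, show i+(2*n-i) = 2*n from by omega]
    linear_combination (2*qb s (2*n) i * XX^(s*2) + 2*qb s (2*n) (i+1) * XX^(s*3) * XX^(s*i)) * hx4
      + (XX:PS)^(s*(i+2)) * h0 + XX^(s*(i+2)) * h1
      + XX^(s*(i+2)) * XX^(s*(2*n-i)) * h2
      - qb s (2*n) (i+2) * hx3 - XX^(s*(i+2)) * qb s (2*n) (i+1) * hx2
      - qb s (2*n) i * hx1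
  · rw [qb_eq_zero s (show 2*n+2 < i+2 from by omega),
        qb_eq_zero s (show 2*n < i+2 from by omega),
        qb_eq_zero s (show 2*n < i+1 from by omega),
        qb_eq_zero s (show 2*n < i from by omega)]
    ring

/-- `p = 1 + X^E * r` -/
def oneMod (E : ℕ) (p : PS) : Prop := ∃ r, p = 1 + XX^E * r

lemma oneMod_mul {E : ℕ} {p q : PS} (hp : oneMod E p) (hq : oneMod E q) : oneMod E (p*q) := by
  obtain ⟨r, rfl⟩ := hp; obtain ⟨r', rfl⟩ := hq
  exact ⟨r + r' + XX^E * r * r', by ring⟩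

lemma oneMod_prod {E : ℕ} (t : Finset ℕ) (F : ℕ → PS) (h : ∀ k ∈ t, oneMod E (F k)) :
    oneMod E (∏ k ∈ t, F k) := by
  classical
  induction t using Finset.induction_on with
  | empty => exact ⟨0, by simp⟩
  | insert _ _ hx ih =>
    rw [Finset.prod_insert hx]
    exact oneMod_mul (h _ (mem_insert_self _ _)) (ih fun k hk => h _ (mem_insert_of_mem hk))

lemma oneMod_factor {E e : ℕ} (h : E ≤ e) : oneMod E (1 - XX^e) := by
  exact ⟨-XX^(e-E), by rw [mul_neg, ← pow_add, show E+(e-E) = e from by omega]; ring⟩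

lemma oneMod_coeff {E : ℕ} {p : PS} (hp : oneMod E p) {d : ℕ} (hd : 0 < d) (hdE : d < E) :
    PowerSeries.coeff d p = 0 := by
  obtain ⟨r, rfl⟩ := hp
  rw [map_add, PowerSeries.coeff_one, if_neg (by omega), PowerSeries.coeff_X_pow_mul' , if_neg (by omega)]
  ring

lemma oneMod_coeff_zero {E : ℕ} {p : PS} (hp : oneMod E p) (hE : 0 < E) :
    PowerSeries.coeff 0 p = 1 := by
  obtain ⟨r, rfl⟩ := hp
  rw [map_add, PowerSeries.coeff_one, if_pos rfl, PowerSeries.coeff_X_pow_mul', if_neg (by omega)]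
  ring

/-- structure of `qb s (2n) i * gs s n`. -/
lemma qb_gs_oneMod (s : ℕ) (hs : 1 ≤ s) (n i : ℕ) (hi : i ≤ 2*n) :
    oneMod (s*((n - Nat.dist i n) + 1)) (qb s (2*n) i * gs s n) := by
  have main : ∀ j, j ≤ n → oneMod (s*(j+1)) (qb s (2*n) j * gs s n) := by
    intro j hj
    have key := qb_mul_gs s (2*n-j) j
    rw [show 2*n-j+j = 2*n from by omega] at key
    have hsplit : gs s n = gs s j * ∏ k ∈ Ioc j n, (1 - XX ^ (s*k)) := by
      rw [gs_def, gs_def, Finset.prod_Ioc_consecutive _ (Nat.zero_le _) hj]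
    rw [hsplit, show qb s (2*n) j * (gs s j * ∏ k ∈ Ioc j n, (1 - XX ^ (s*k)))
        = (qb s (2*n) j * gs s j) * ∏ k ∈ Ioc j n, (1 - XX ^ (s*k)) from by ring, key]
    apply oneMod_mul
    · apply oneMod_prod
      intro k hk
      simp only [mem_Ioc] at hk
      exact oneMod_factor (Nat.mul_le_mul_left s (by omega))
    · apply oneMod_prod
      intro k hk
      simp only [mem_Ioc] at hk
      exact oneMod_factor (Nat.mul_le_mul_left s (by omega))
  rcases le_or_gt i n with h | h
  · rw [show Nat.dist i n = n - i from Nat.dist_eq_sub_of_le h, show n-(n-i) = i from by omega]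
    exact main i h
  · rw [qb_symm s hs (2*n) i (by omega),
        show Nat.dist i n = i - n from Nat.dist_eq_sub_of_le_right (by omega)]
    rw [show n-(i-n) = 2*n-i from by omega]
    exact main (2*n-i) (by omega)




/-- the two-variable finite Jacobi product, as a polynomial in `z` over `PS`,
with `q = X^d`:  `∏_{k=1}^{n} (1 + q^{2k-1} z)(z + q^{2k-1})`. -/
def Ln (d n : ℕ) : Polynomial PS :=
  ∏ k ∈ Ioc 0 n, ((1 + Polynomial.C (XX^(d*(2*k-1))) * Polynomial.X)
    * (Polynomial.X + Polynomial.C (XX^(d*(2*k-1)))))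

lemma Ln_zero (d : ℕ) : Ln d 0 = 1 := by simp [Ln]

lemma Ln_succ (d n : ℕ) : Ln d (n+1) = Ln d n *
    (Polynomial.C (XX^(d*(2*n+1))) + Polynomial.C (1 + (XX^(d*(2*n+1)))^2) * Polynomial.X
      + Polynomial.C (XX^(d*(2*n+1))) * Polynomial.X^2) := by
  rw [Ln, Ln, prod_Ioc_succ_top (Nat.zero_le _), show 2*(n+1)-1 = 2*n+1 from by omega]
  rw [show Polynomial.C (1 + (XX^(d*(2*n+1)))^2)
      = 1 + Polynomial.C (XX^(d*(2*n+1)))^2 from by rw [map_add, map_one, map_pow]]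
  ring

lemma Ln_coeff_gen (d n : ℕ) (i : ℕ) :
    (Ln d (n+1)).coeff i = (Ln d n).coeff i * XX^(d*(2*n+1))
      + (if 1 ≤ i then (Ln d n).coeff (i-1) * (1 + (XX^(d*(2*n+1)))^2) else 0)
      + (if 2 ≤ i then (Ln d n).coeff (i-2) * XX^(d*(2*n+1)) else 0) := by
  rw [Ln_succ, mul_add, mul_add, coeff_add, coeff_add, Polynomial.coeff_mul_C]
  congr 1
  · congr 1
    rw [show Ln d n * (Polynomial.C (1 + (XX^(d*(2*n+1)))^2) * Polynomial.X)
        = (Ln d n * Polynomial.C (1 + (XX^(d*(2*n+1)))^2)) * Polynomial.X^1 from by ring]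
    rw [Polynomial.coeff_mul_X_pow', Polynomial.coeff_mul_C]
  · rw [show Ln d n * (Polynomial.C (XX^(d*(2*n+1))) * Polynomial.X^2)
        = (Ln d n * Polynomial.C (XX^(d*(2*n+1)))) * Polynomial.X^2 from by ring]
    rw [Polynomial.coeff_mul_X_pow', Polynomial.coeff_mul_C]

lemma Ln_coeff_step (d n i : ℕ) :
    (Ln d (n+1)).coeff (i+2) = XX^(d*(2*n+1)) * (Ln d n).coeff (i+2)
      + (1 + (XX^(d*(2*n+1)))^2) * (Ln d n).coeff (i+1)
      + XX^(d*(2*n+1)) * (Ln d n).coeff i := by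
  rw [Ln_coeff_gen, if_pos (by omega), if_pos (by omega),
      show i+2-1 = i+1 from by omega, show i+2-2 = i from by omega]
  ring

lemma Ln_coeff_one (d n : ℕ) :
    (Ln d (n+1)).coeff 1 = XX^(d*(2*n+1)) * (Ln d n).coeff 1
      + (1 + (XX^(d*(2*n+1)))^2) * (Ln d n).coeff 0 := by
  rw [Ln_coeff_gen, if_pos (by omega), if_neg (by omega)]
  ring

lemma Ln_coeff_zero (d n : ℕ) :
    (Ln d (n+1)).coeff 0 = XX^(d*(2*n+1)) * (Ln d n).coeff 0 := by
  rw [Ln_coeff_gen, if_neg (by omega), if_neg (by omega)]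
  ring

/-- THE finite Jacobi triple product identity, coefficientwise, in multiplied form. -/
lemma Ln_coeff (d : ℕ) (hd : 1 ≤ d) :
    ∀ n i, (Ln d n).coeff i * XX^(2*d*n*i) = XX^(d*(i^2+n^2)) * qb (2*d) (2*n) i := by
  intro n
  induction n with
  | zero =>
    intro i
    match i with
    | 0 => simp [Ln_zero, qb_zero_right]
    | i+1 =>
      rw [Ln_zero, Polynomial.coeff_one, if_neg (by omega), qb_eq_zero (2*d) (by omega)]
      ring
  | succ n ih =>
    intro i
    match i with
    | 0 =>
      rw [Ln_coeff_zero]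
      have h0 := ih 0
      rw [show 2*(n+1) = 2*n+2 from by omega, qb_zero_right]
      rw [qb_zero_right] at h0
      linear_combination XX^(d*(2*n+1)) * h0
    | 1 =>
      rw [Ln_coeff_one]
      have h1 := ih 1
      have h0 := ih 0
      -- qb (2d) (2n+2) 1 = qb (2d) (2n+1) 1 + X^{2d*(2n+1)} * qb (2n+1) 0 ... expand twice
      have e1 : qb (2*d) (2*n+2) 1 = qb (2*d) (2*n+1) 1 + XX^(2*d*(2*n+1)) * 1 := by
        have := qb_succ_succ (2*d) (2*n+1) 0
        rw [show 2*n+1-0 = 2*n+1 from rfl, qb_zero_right] at this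
        exact this
      have P1 : qb (2*d) (2*n+1) 1 = XX^(2*d*1) * qb (2*d) (2*n) 1 + 1 := by
        have := qb_pascalB (2*d) (by omega) (2*n) 0
        rw [qb_zero_right] at this
        exact this
      rw [show 2*(n+1) = 2*n+2 from by omega]
      rw [qb_zero_right] at h0
      linear_combination XX^(d*(2*n+1)) * XX^(2*d) * h1
        + (1 + (XX^(d*(2*n+1)))^2) * XX^(2*d*(n+1)) * h0
        - XX^(d*(1+(n+1)^2)) * e1 - XX^(d*(1+(n+1)^2)) * P1
    | i+2 =>
      rw [Ln_coeff_step, show 2*(n+1) = 2*n+2 from by omega]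
      have h2 := ih (i+2)
      have h1 := ih (i+1)
      have h0 := ih i
      have comp := qb_comp (2*d) (by omega) n (i)
      have cancel : ∀ u v : PS, u * XX^(2*d*(i+2)) = v * XX^(2*d*(i+2)) → u = v := by
        intro u v h
        exact mul_right_cancel₀ (pow_ne_zero _ PowerSeries.X_ne_zero) h
      apply cancel
      linear_combination (XX^(d*(2*n+1)) * XX^(4*d*(i+2))) * h2
        + ((1 + (XX^(d*(2*n+1)))^2) * XX^(2*d*(n+2*i+4))) * h1
        + (XX^(d*(2*n+1)) * XX^(2*d*(2*n+2*i+4))) * h0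
        - XX^(d*((i+2)^2+(n+1)^2)) * comp




lemma dist_natAbs (i n : ℕ) : Nat.dist i n = ((i:ℤ) - n).natAbs := by
  rcases le_total i n with h|h
  · rw [Nat.dist_eq_sub_of_le h]; omega
  · rw [Nat.dist_eq_sub_of_le_right h]; omega

lemma dist_sq_add (i n : ℕ) : Nat.dist i n ^ 2 + 2*(i*n) = i^2 + n^2 := by
  rcases le_total i n with h|h
  · rw [Nat.dist_eq_sub_of_le h]; zify [h]; ring
  · rw [Nat.dist_eq_sub_of_le_right h]; zify [h]; ring

lemma dist_le_n {i n : ℕ} (h : i ≤ 2*n) : Nat.dist i n ≤ n := by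
  rw [dist_natAbs]; omega

/-- closed form for the coefficients of `Ln`. -/
lemma Ln_coeff' (d : ℕ) (hd : 1 ≤ d) (n i : ℕ) :
    (Ln d n).coeff i = XX^(d * Nat.dist i n ^ 2) * qb (2*d) (2*n) i := by
  have h := Ln_coeff d hd n i
  have hexp : d * Nat.dist i n ^ 2 + 2*d*n*i = d*(i^2+n^2) := by
    have h2 := dist_sq_add i n
    calc d * Nat.dist i n ^ 2 + 2*d*n*i = d * (Nat.dist i n ^ 2 + 2*(i*n)) := by ring
    _ = d*(i^2+n^2) := by rw [h2]
  apply mul_right_cancel₀ (pow_ne_zero (2*d*n*i) (PowerSeries.X_ne_zero : (XX:PS) ≠ 0))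
  rw [h, mul_right_comm, ← pow_add, hexp]

lemma Ln_natDegree_le (d n : ℕ) : (Ln d n).natDegree ≤ 2*n := by
  rw [Ln]
  refine le_trans (Polynomial.natDegree_prod_le _ _) ?_
  calc ∑ k ∈ Ioc 0 n, ((1 + Polynomial.C (XX^(d*(2*k-1))) * Polynomial.X)
        * (Polynomial.X + Polynomial.C (XX^(d*(2*k-1))))).natDegree
      ≤ ∑ k ∈ Ioc 0 n, 2 := by
        apply Finset.sum_le_sum
        intro k _
        refine le_trans (Polynomial.natDegree_mul_le) ?_
        have h1 : (1 + Polynomial.C (XX^(d*(2*k-1))) * Polynomial.X).natDegree ≤ 1 := by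
          refine le_trans (Polynomial.natDegree_add_le _ _) (max_le (by simp) ?_)
          exact le_trans (Polynomial.natDegree_C_mul_le _ _) Polynomial.natDegree_X_le
        have h2 : (Polynomial.X + Polynomial.C (XX^(d*(2*k-1))) : Polynomial PS).natDegree ≤ 1 := by
          refine le_trans (Polynomial.natDegree_add_le _ _) (max_le Polynomial.natDegree_X_le ?_)
          simp
        omega
    _ = 2*n := by simp [mul_comm]

lemma Ln_eval (d : ℕ) (hd : 1 ≤ d) (n : ℕ) (e : PS) :
    Polynomial.eval e (Ln d n)
      = ∑ i ∈ range (2*n+1), XX^(d * Nat.dist i n ^ 2) * qb (2*d) (2*n) i * e^i := by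
  rw [Polynomial.eval_eq_sum_range' (n := 2*n+1) (lt_of_le_of_lt (Ln_natDegree_le d n) (by omega))]
  apply Finset.sum_congr rfl
  intro i _
  rw [Ln_coeff' d hd]

/-- the key coefficient-extraction for one term. -/
lemma coeff_term (d : ℕ) (hd : 1 ≤ d) (N n i : ℕ) (hn : n = N+1) (hi : i ≤ 2*n) :
    PowerSeries.coeff (N+n) (XX^(d * Nat.dist i n ^ 2 + i) * (qb (2*d) (2*n) i * gs (2*d) n))
      = if d * Nat.dist i n ^ 2 + i = N+n then 1 else 0 := by
  set m := Nat.dist i n with hm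
  have hmn : m ≤ n := dist_le_n hi
  have hOM := qb_gs_oneMod (2*d) (by omega) n i hi
  rw [← hm] at hOM
  set E := d * m^2 + i with hE
  rcases lt_trichotomy E (N+n) with hlt | heq | hgt
  · rw [if_neg (by omega)]
    rw [PowerSeries.coeff_X_pow_mul', if_pos (by omega)]
    have hcase : i + m = n ∨ i = n + m := by
      rcases le_total i n with h|h
      · left; rw [hm, Nat.dist_eq_sub_of_le h]; omega
      · right; rw [hm, Nat.dist_eq_sub_of_le_right h]; omega
    have hbound : N + n - E < 2*d*((n - m)+1) := by
      zify [le_of_lt hlt, hmn]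
      have hEi : (E:ℤ) = d*(m:ℤ)^2 + i := by rw [hE]; push_cast; ring
      have hdZ : (1:ℤ) ≤ d := by exact_mod_cast hd
      have hnZ : (n:ℤ) = N+1 := by exact_mod_cast hn
      have hmZ : (0:ℤ) ≤ m := by positivity
      have hmn' : (m:ℤ) ≤ n := by exact_mod_cast hmn
      rw [hEi]
      rcases hcase with h|h
      · have h' : (i:ℤ) + m = n := by exact_mod_cast h
        nlinarith [sq_nonneg ((m:ℤ) - 1)]
      · have h' : (i:ℤ) = (n:ℤ) + m := by exact_mod_cast h
        nlinarith [sq_nonneg ((m:ℤ) - 1)]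
    exact oneMod_coeff hOM (by omega) hbound
  · rw [if_pos heq, heq]
    rw [PowerSeries.coeff_X_pow_mul', if_pos (by omega), Nat.sub_self]
    exact oneMod_coeff_zero hOM (Nat.mul_pos (by omega) (Nat.succ_pos _))
  · rw [if_neg (by omega)]
    rw [PowerSeries.coeff_X_pow_mul', if_neg (by omega)]




/-- indicator of `N` being twice a triangular number (i.e. `N = 2j²+j` for some `j ∈ ℤ`),
which says exactly that `N` is a triangular number value `t(t+1)/2`. -/
def triInd (N : ℕ) : ℤ := ∑ j ∈ Icc (-(N:ℤ)) N, if 2*j^2 + j = N then 1 else 0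

/-- signed pentagonal-type indicator: `Σ_j (-1)^j [N = j(3j+1)]`. -/
def pentInd (N : ℕ) : ℤ := ∑ j ∈ Icc (-(N:ℤ)) N, if j*(3*j+1) = N then (-1)^j.natAbs else 0

lemma tri_uniq {j j' : ℤ} (h : 2*j^2+j = 2*j'^2+j') : j = j' := by
  have h2 : (j - j') * (2*(j+j') + 1) = 0 := by linear_combination h
  rcases mul_eq_zero.1 h2 with h3|h3
  · linarith
  · omega

lemma pent_uniq {j j' : ℤ} (h : j*(3*j+1) = j'*(3*j'+1)) : j = j' := by
  have h2 : (j - j') * (3*(j+j') + 1) = 0 := by linear_combination h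
  rcases mul_eq_zero.1 h2 with h3|h3
  · linarith
  · omega

lemma dist_sq_cast (i n : ℕ) : ((Nat.dist i n : ℤ))^2 = ((i:ℤ) - n)^2 := by
  rw [dist_natAbs, ← Int.abs_eq_natAbs, sq_abs]

/-- condition transfer -/
lemma cond_cast (c N n i : ℕ) :
    (c * Nat.dist i n ^ 2 + i = N+n) ↔ ((c:ℤ)*((i:ℤ)-n)^2 + ((i:ℤ)-n) = N) := by
  rw [← dist_sq_cast]
  constructor
  · intro h
    have : ((c * Nat.dist i n ^ 2 + i : ℕ) : ℤ) = ((N+n : ℕ) : ℤ) := by exact_mod_cast h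
    push_cast at this
    linarith
  · intro h
    have : ((c * Nat.dist i n ^ 2 + i : ℕ) : ℤ) = ((N+n : ℕ) : ℤ) := by push_cast; linarith
    exact_mod_cast this

/-- the ψ-side sum identity. -/
lemma sum_id_psi (N : ℕ) :
    (∑ i ∈ range (2*(N+1)+1), if 2 * Nat.dist i (N+1) ^ 2 + i = N+(N+1) then (1:ℤ) else 0)
      = triInd N := by
  by_cases hex : ∃ j : ℤ, 2*j^2 + j = (N:ℤ)
  · obtain ⟨j0, hj0⟩ := hex
    have hjb : j0.natAbs ≤ N := by
      rcases le_or_gt 0 j0 with h|h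
      · have : j0 ≤ N := by nlinarith
        omega
      · have : -j0 ≤ N := by nlinarith
        omega
    have hi0 : (((N:ℤ)+1) + j0).toNat ≤ 2*(N+1) ∧ ((((N:ℤ)+1) + j0).toNat : ℤ) = (N+1) + j0 := by
      omega
    set i0 := (((N:ℤ)+1) + j0).toNat with hi0d
    rw [Finset.sum_eq_single i0, triInd, Finset.sum_eq_single j0]
    · rw [if_pos hj0, if_pos (by rw [cond_cast]; push_cast [hi0.2]; linear_combination hj0)]
    · intro j hj hne
      rw [if_neg (fun hc => hne (tri_uniq (hc.trans hj0.symm)))]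
    · intro h
      exact absurd (by simp only [mem_Icc]; omega) h
    · intro i hi hne
      by_cases hc : 2 * Nat.dist i (N+1) ^ 2 + i = N+(N+1)
      · exfalso
        rw [cond_cast] at hc
        push_cast at hc
        have : (i:ℤ) - ((N:ℤ)+1) = j0 := tri_uniq (by linear_combination hc - hj0)
        apply hne
        omega
      · rw [if_neg hc]
    · intro h
      exact absurd (by simp only [mem_range]; omega) h
  · rw [Finset.sum_eq_zero, triInd, Finset.sum_eq_zero]
    · intro j _
      rw [if_neg (fun hc => hex ⟨j, hc⟩)]
    · intro i _
      refine if_neg (fun hc => hex ⟨(i:ℤ)-((N:ℤ)+1), ?_⟩)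
      rw [cond_cast] at hc
      push_cast at hc ⊢
      linear_combination hc

/-- the pentagonal-side sum identity. -/
lemma sum_id_pent (N : ℕ) :
    (∑ i ∈ range (2*(N+1)+1), ((-1:ℤ))^(Nat.dist i (N+1)) *
        (if 3 * Nat.dist i (N+1) ^ 2 + i = N+(N+1) then (1:ℤ) else 0))
      = pentInd N := by
  have hcond : ∀ i : ℕ, (3 * Nat.dist i (N+1) ^ 2 + i = N+(N+1))
      ↔ (((i:ℤ)-((N:ℤ)+1))*(3*((i:ℤ)-((N:ℤ)+1))+1) = N) := by
    intro i
    rw [cond_cast]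
    push_cast
    constructor <;> intro h <;> linear_combination h
  by_cases hex : ∃ j : ℤ, j*(3*j+1) = (N:ℤ)
  · obtain ⟨j0, hj0⟩ := hex
    have hjb : j0.natAbs ≤ N := by
      rcases le_or_gt 0 j0 with h|h
      · have : j0 ≤ N := by nlinarith
        omega
      · have : -j0 ≤ N := by nlinarith
        omega
    have hi0 : (((N:ℤ)+1) + j0).toNat ≤ 2*(N+1) ∧ ((((N:ℤ)+1) + j0).toNat : ℤ) = (N+1) + j0 := by
      omega
    set i0 := (((N:ℤ)+1) + j0).toNat with hi0d
    rw [Finset.sum_eq_single i0, pentInd, Finset.sum_eq_single j0]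
    · rw [if_pos hj0, if_pos (by rw [hcond]; push_cast [hi0.2]; linear_combination hj0)]
      rw [mul_one, dist_natAbs]
      congr 2
      omega
    · intro j hj hne
      rw [if_neg (fun hc => hne (pent_uniq (hc.trans hj0.symm)))]
    · intro h
      exact absurd (by simp only [mem_Icc]; omega) h
    · intro i hi hne
      by_cases hc : 3 * Nat.dist i (N+1) ^ 2 + i = N+(N+1)
      · exfalso
        rw [hcond] at hc
        have : (i:ℤ) - ((N:ℤ)+1) = j0 := pent_uniq (by linear_combination hc - hj0)
        apply hne
        omega
      · rw [if_neg hc, mul_zero]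
    · intro h
      exact absurd (by simp only [mem_range]; omega) h
  · rw [Finset.sum_eq_zero, pentInd, Finset.sum_eq_zero]
    · intro j _
      rw [if_neg (fun hc => hex ⟨j, hc⟩)]
    · intro i _
      rw [if_neg (fun hc => hex ⟨(i:ℤ)-((N:ℤ)+1), by rw [hcond] at hc; exact hc⟩), mul_zero]




lemma reindex1 (n : ℕ) :
    ∏ k ∈ Ioc 0 n, ((1 + XX^(4*k-3)) * (1 + XX^(4*k-1)))
      = ∏ k ∈ Ioc 0 (2*n), (1 + XX^(2*k-1)) := by
  induction n with
  | zero => simp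
  | succ n ih =>
    rw [prod_Ioc_succ_top (Nat.zero_le _), ih,
        show 2*(n+1) = (2*n+1)+1 from by omega,
        prod_Ioc_succ_top (Nat.zero_le _), prod_Ioc_succ_top (Nat.zero_le _)]
    rw [show 2*((2*n+1)+1)-1 = 4*(n+1)-1 from by omega,
        show 2*(2*n+1)-1 = 4*(n+1)-3 from by omega]
    ring

lemma eval_Ln_X (n : ℕ) :
    Polynomial.eval XX (Ln 2 n)
      = XX^n * ∏ k ∈ Ioc 0 (2*n), (1 + XX^(2*k-1)) := by
  rw [Ln, Polynomial.eval_prod]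
  have step : ∀ k ∈ Ioc 0 n,
      Polynomial.eval XX ((1 + Polynomial.C (XX^(2*(2*k-1))) * Polynomial.X)
        * (Polynomial.X + Polynomial.C (XX^(2*(2*k-1)))))
      = XX * ((1 + XX^(4*k-3)) * (1 + XX^(4*k-1))) := by
    intro k hk
    simp only [mem_Ioc] at hk
    simp only [eval_mul, eval_add, eval_one, eval_C, eval_X]
    have f1 : XX * XX^(4*k-3) = XX^(2*(2*k-1)) := by
      rw [← pow_succ']; congr 1; omega
    have f2 : XX^(2*(2*k-1)) * XX = XX^(4*k-1) := by
      rw [← pow_succ]; congr 1; omega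
    linear_combination (-(1+XX^(4*k-1))) * f1 + (XX + XX^(2*(2*k-1))) * f2
  rw [Finset.prod_congr rfl step, Finset.prod_mul_distrib, Finset.prod_const,
      Nat.card_Ioc, Nat.sub_zero, reindex1]

lemma eval_Ln_negX (n : ℕ) :
    Polynomial.eval (-XX) (Ln 3 n)
      = (-XX)^n * ∏ k ∈ Ioc 0 n, ((1 - XX^(6*k-2)) * (1 - XX^(6*k-4))) := by
  rw [Ln, Polynomial.eval_prod]
  have step : ∀ k ∈ Ioc 0 n,
      Polynomial.eval (-XX) ((1 + Polynomial.C (XX^(3*(2*k-1))) * Polynomial.X)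
        * (Polynomial.X + Polynomial.C (XX^(3*(2*k-1)))))
      = (-XX) * ((1 - XX^(6*k-2)) * (1 - XX^(6*k-4))) := by
    intro k hk
    simp only [mem_Ioc] at hk
    simp only [eval_mul, eval_add, eval_one, eval_C, eval_X, eval_neg]
    have f1 : XX * XX^(6*k-4) = XX^(3*(2*k-1)) := by
      rw [← pow_succ']; congr 1; omega
    have f2 : XX^(3*(2*k-1)) * XX = XX^(6*k-2) := by
      rw [← pow_succ]; congr 1; omega
    linear_combination ((XX^(6*k-2) - 1)) * f1 + (XX - XX^(3*(2*k-1))) * f2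
  rw [Finset.prod_congr rfl step, Finset.prod_mul_distrib, Finset.prod_const,
      Nat.card_Ioc, Nat.sub_zero]

lemma neg_pow_eq (c : ℕ) : ((-XX)^c : PS) = PowerSeries.C ((-1)^c) * XX^c := by
  rw [neg_pow]
  congr 1
  rw [map_pow]
  congr 1
  simp

/-- ψ extraction : `coeff_N [∏(1+X^{2k-1}) · ∏(1-X^{4k})] = triInd N`. -/
lemma psi_core (N : ℕ) :
    PowerSeries.coeff N ((∏ k ∈ Ioc 0 (2*(N+1)), (1 + XX^(2*k-1))) * gs 4 (N+1)) = triInd N := by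
  have hev := (eval_Ln_X (N+1)).symm.trans (Ln_eval 2 one_le_two (N+1) XX)
  have hc := congrArg (fun p => PowerSeries.coeff (N+(N+1)) (p * gs 4 (N+1))) hev
  rw [mul_assoc, PowerSeries.coeff_X_pow_mul] at hc
  rw [hc, Finset.sum_mul, map_sum, ← sum_id_psi N]
  apply Finset.sum_congr rfl
  intro i hi
  simp only [mem_range] at hi
  rw [show XX^(2 * Nat.dist i (N+1) ^ 2) * qb 4 (2*(N+1)) i * XX^i * gs 4 (N+1)
      = XX^(2 * Nat.dist i (N+1) ^ 2 + i) * (qb 4 (2*(N+1)) i * gs 4 (N+1)) from by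
        rw [pow_add]; ring]
  exact coeff_term 2 (by omega) N (N+1) i rfl (by omega)

lemma parity_pow (i n : ℕ) : ((-1:ℤ))^(n+i) = (-1)^(Nat.dist i n) := by
  have h : n + i = Nat.dist i n + 2 * (min i n) := by
    rw [dist_natAbs]; omega
  rw [h, pow_add, pow_mul, neg_one_sq, one_pow, mul_one]

/-- pentagonal extraction : `coeff_N [∏(1-X^{6k-2})(1-X^{6k-4}) · ∏(1-X^{6k})] = pentInd N`. -/
lemma pent_core (N : ℕ) :
    PowerSeries.coeff N ((∏ k ∈ Ioc 0 (N+1), ((1 - XX^(6*k-2)) * (1 - XX^(6*k-4)))) * gs 6 (N+1))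
      = pentInd N := by
  have hev := (eval_Ln_negX (N+1)).symm.trans (Ln_eval 3 (by omega) (N+1) (-XX))
  have hc := congrArg (fun p => PowerSeries.coeff (N+(N+1)) (p * gs 6 (N+1))) hev
  rw [neg_pow_eq, mul_assoc, mul_assoc, PowerSeries.coeff_C_mul,
      PowerSeries.coeff_X_pow_mul] at hc
  -- hc : (-1)^(N+1) * coeff N (P * gs) = coeff (N+N+1) (Σ * gs)
  have hrhs : PowerSeries.coeff (N+(N+1)) ((∑ i ∈ range (2*(N+1)+1),
        XX^(3 * Nat.dist i (N+1) ^ 2) * qb 6 (2*(N+1)) i * (-XX)^i) * gs 6 (N+1))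
      = ∑ i ∈ range (2*(N+1)+1), (-1)^i *
          (if 3 * Nat.dist i (N+1) ^ 2 + i = N+(N+1) then (1:ℤ) else 0) := by
    rw [Finset.sum_mul, map_sum]
    apply Finset.sum_congr rfl
    intro i hi
    simp only [mem_range] at hi
    rw [neg_pow_eq]
    rw [show XX^(3 * Nat.dist i (N+1) ^ 2) * qb 6 (2*(N+1)) i * (PowerSeries.C ((-1)^i) * XX^i) * gs 6 (N+1)
        = PowerSeries.C ((-1)^i) * (XX^(3 * Nat.dist i (N+1) ^ 2 + i) * (qb 6 (2*(N+1)) i * gs 6 (N+1))) from by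
          rw [pow_add]; ring]
    rw [PowerSeries.coeff_C_mul]
    rw [coeff_term 3 (by omega) N (N+1) i rfl (by omega)]
  rw [hrhs] at hc
  have goal2 : PowerSeries.coeff N ((∏ k ∈ Ioc 0 (N+1), ((1 - XX^(6*k-2)) * (1 - XX^(6*k-4)))) * gs 6 (N+1))
      = ∑ i ∈ range (2*(N+1)+1), (-1)^(Nat.dist i (N+1)) *
          (if 3 * Nat.dist i (N+1) ^ 2 + i = N+(N+1) then (1:ℤ) else 0) := by
    have hsq : ((-1:ℤ))^(N+1) * ((-1:ℤ))^(N+1) = 1 := by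
      rw [← pow_add]
      exact Even.neg_one_pow ⟨N+1, by ring⟩
    have := congrArg (fun z => ((-1:ℤ))^(N+1) * z) hc
    rw [← mul_assoc, hsq, one_mul] at this
    rw [this, Finset.mul_sum]
    apply Finset.sum_congr rfl
    intro i hi
    rw [← mul_assoc, ← pow_add, parity_pow]
  rw [goal2]
  exact sum_id_pent N




/-- series attached to an infinite product with factor family `F`. -/
def PF (F : ℕ → PS) : PS := PowerSeries.mk fun n => PowerSeries.coeff n (∏ k ∈ Ioc 0 n, F k)

/-- a family is *admissible* if its `k`-th factor is `1 + O(X^k)`. -/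
def Adm (F : ℕ → PS) : Prop := ∀ k, 1 ≤ k → ∃ u, F k = 1 + XX^k * u

lemma adm_sub {e : ℕ → ℕ} (he : ∀ k, 1 ≤ k → k ≤ e k) : Adm (fun k => 1 - XX^(e k)) := by
  intro k hk
  have hke := he k hk
  exact ⟨-XX^(e k - k), by rw [mul_neg, ← pow_add, show k + (e k - k) = e k from by omega]; ring⟩

lemma adm_add {e : ℕ → ℕ} (he : ∀ k, 1 ≤ k → k ≤ e k) : Adm (fun k => 1 + XX^(e k)) := by
  intro k hk
  have hke := he k hk
  exact ⟨XX^(e k - k), by rw [← pow_add, show k + (e k - k) = e k from by omega]⟩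

lemma adm_mul {F G : ℕ → PS} (hF : Adm F) (hG : Adm G) : Adm (fun k => F k * G k) := by
  intro k hk
  obtain ⟨u, hu⟩ := hF k hk
  obtain ⟨v, hv⟩ := hG k hk
  refine ⟨u + v + XX^k * u * v, ?_⟩
  dsimp only
  rw [hu, hv]
  ring

lemma prod_stab {F : ℕ → PS} (hF : Adm F) (N : ℕ) :
    ∀ M, N ≤ M → PowerSeries.coeff N (∏ k ∈ Ioc 0 M, F k) = PowerSeries.coeff N (∏ k ∈ Ioc 0 N, F k) := by
  intro M hM
  induction M with
  | zero =>
    obtain rfl : N = 0 := by omega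
    rfl
  | succ M ih =>
    rcases Nat.lt_or_ge N (M+1) with h | h
    · have hNM : N ≤ M := by omega
      rw [prod_Ioc_succ_top (Nat.zero_le _)]
      obtain ⟨u, hu⟩ := hF (M+1) (by omega)
      rw [hu, mul_add, mul_one, map_add, ih hNM]
      rw [show (∏ k ∈ Ioc 0 M, F k) * (XX^(M+1) * u) = XX^(M+1) * ((∏ k ∈ Ioc 0 M, F k) * u)
          from by ring]
      rw [PowerSeries.coeff_X_pow_mul', if_neg (by omega)]
      ring
    · have : N = M+1 := by omega
      subst this
      rfl

lemma PF_coeff {F : ℕ → PS} (hF : Adm F) (N M : ℕ) (h : N ≤ M) :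
    PowerSeries.coeff N (PF F) = PowerSeries.coeff N (∏ k ∈ Ioc 0 M, F k) := by
  rw [PF, PowerSeries.coeff_mk, prod_stab hF N M h]

lemma PF_mul_coeff {F G : ℕ → PS} (hF : Adm F) (hG : Adm G) (N M₁ M₂ : ℕ)
    (h1 : N ≤ M₁) (h2 : N ≤ M₂) :
    PowerSeries.coeff N (PF F * PF G)
      = PowerSeries.coeff N ((∏ k ∈ Ioc 0 M₁, F k) * (∏ k ∈ Ioc 0 M₂, G k)) := by
  rw [PowerSeries.coeff_mul, PowerSeries.coeff_mul]
  apply Finset.sum_congr rfl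
  intro p hp
  simp only [Finset.HasAntidiagonal.mem_antidiagonal] at hp
  rw [PF_coeff hF p.1 M₁ (by omega), PF_coeff hG p.2 M₂ (by omega),
      prod_stab hF p.1 M₁ (by omega), prod_stab hG p.2 M₂ (by omega)]

/-- reindexings of finite products -/
lemma prd1 (n : ℕ) : ∏ k ∈ Ioc 0 (2*n), (1 - XX^k)
    = (∏ k ∈ Ioc 0 n, (1 - XX^(2*k))) * ∏ k ∈ Ioc 0 n, (1 - XX^(2*k-1)) := by
  induction n with
  | zero => simp
  | succ n ih =>
    rw [show 2*(n+1) = (2*n+1)+1 from by omega, prod_Ioc_succ_top (Nat.zero_le _),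
        prod_Ioc_succ_top (Nat.zero_le _), ih, prod_Ioc_succ_top (Nat.zero_le _),
        prod_Ioc_succ_top (Nat.zero_le _), show 2*(n+1)-1 = 2*n+1 from by omega]
    ring

lemma prd2 (n : ℕ) : ∏ k ∈ Ioc 0 n, ((1 - XX^(2*k-1)) * (1 + XX^(2*k-1)))
    = ∏ k ∈ Ioc 0 n, (1 - XX^(4*k-2)) := by
  apply Finset.prod_congr rfl
  intro k hk
  simp only [mem_Ioc] at hk
  have f1 : XX^(2*k-1) * XX^(2*k-1) = XX^(4*k-2) := by
    rw [← pow_add]; congr 1; omega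
  linear_combination -f1

lemma prd3 (n : ℕ) : ∏ k ∈ Ioc 0 (2*n), (1 - XX^(2*k))
    = (∏ k ∈ Ioc 0 n, (1 - XX^(4*k))) * ∏ k ∈ Ioc 0 n, (1 - XX^(4*k-2)) := by
  induction n with
  | zero => simp
  | succ n ih =>
    rw [show 2*(n+1) = (2*n+1)+1 from by omega, prod_Ioc_succ_top (Nat.zero_le _),
        prod_Ioc_succ_top (Nat.zero_le _), ih, prod_Ioc_succ_top (Nat.zero_le _),
        prod_Ioc_succ_top (Nat.zero_le _)]
    rw [show 2*((2*n+1)+1) = 4*(n+1) from by omega, show 2*(2*n+1) = 4*(n+1)-2 from by omega]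
    ring

lemma prd4 (n : ℕ) : ∏ k ∈ Ioc 0 (3*n), (1 - XX^(2*k))
    = (∏ k ∈ Ioc 0 n, ((1 - XX^(6*k-2)) * (1 - XX^(6*k-4)))) * ∏ k ∈ Ioc 0 n, (1 - XX^(6*k)) := by
  induction n with
  | zero => simp
  | succ n ih =>
    rw [show 3*(n+1) = ((3*n+1)+1)+1 from by omega, prod_Ioc_succ_top (Nat.zero_le _),
        prod_Ioc_succ_top (Nat.zero_le _), prod_Ioc_succ_top (Nat.zero_le _), ih,
        prod_Ioc_succ_top (Nat.zero_le _), prod_Ioc_succ_top (Nat.zero_le _)]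
    rw [show 2*(((3*n+1)+1)+1) = 6*(n+1) from by omega,
        show 2*((3*n+1)+1) = 6*(n+1)-2 from by omega,
        show 2*(3*n+1) = 6*(n+1)-4 from by omega]
    ring

-- admissibility of the standard families
lemma adm_f (m : ℕ) (hm : 1 ≤ m) : Adm (fun k => 1 - XX^(m*k)) :=
  adm_sub (fun k hk => by nlinarith)
lemma adm_fodd : Adm (fun k => 1 - XX^(2*k-1)) := adm_sub (fun k hk => by omega)
lemma adm_hodd : Adm (fun k => 1 + XX^(2*k-1)) := adm_add (fun k hk => by omega)
lemma adm_g2 : Adm (fun k => 1 - XX^(4*k-2)) := adm_sub (fun k hk => by omega)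
lemma adm_pent : Adm (fun k => (1 - XX^(6*k-2)) * (1 - XX^(6*k-4))) :=
  adm_mul (adm_sub (fun k hk => by omega)) (adm_sub (fun k hk => by omega))

/-- our internal versions of the series in play -/
def ff (m : ℕ) : PS := PF (fun k => 1 - XX^(m*k))
def serFodd : PS := PF (fun k => 1 - XX^(2*k-1))
def serHodd : PS := PF (fun k => 1 + XX^(2*k-1))
def serG2 : PS := PF (fun k => 1 - XX^(4*k-2))
def thePsi : PS := PowerSeries.mk fun n => triInd n

lemma S1 : ff 1 = ff 2 * serFodd := by
  ext N
  rw [ff, ff, serFodd, PF_mul_coeff (adm_f 2 (by omega)) adm_fodd N N N le_rfl le_rfl,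
      PF_coeff (adm_f 1 le_rfl) N (2*N) (by omega)]
  simp only [one_mul]
  rw [← prd1 N]

lemma S2 : serFodd * serHodd = serG2 := by
  ext N
  rw [serFodd, serHodd, serG2, PF_mul_coeff adm_fodd adm_hodd N N N le_rfl le_rfl,
      PF_coeff adm_g2 N N le_rfl, ← Finset.prod_mul_distrib, prd2]

lemma S3 : ff 2 = ff 4 * serG2 := by
  ext N
  rw [ff, ff, serG2, PF_mul_coeff (adm_f 4 (by omega)) adm_g2 N N N le_rfl le_rfl,
      PF_coeff (adm_f 2 (by omega)) N (2*N) (by omega)]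
  rw [← prd3 N]

lemma S4 : thePsi = serHodd * ff 4 := by
  ext N
  rw [thePsi, PowerSeries.coeff_mk, serHodd, ff,
      PF_mul_coeff adm_hodd (adm_f 4 (by omega)) N (2*(N+1)) (N+1) (by omega) (by omega)]
  rw [← psi_core N, gs_def]

lemma S5 : ff 2 = PowerSeries.mk fun n => pentInd n := by
  ext N
  rw [ff, PowerSeries.coeff_mk, PF_coeff (adm_f 2 (by omega)) N (3*(N+1)) (by omega)]
  rw [← pent_core N, gs_def, ← prd4 (N+1)]

/-- GAUSS : ψ(q) ∏(1-q^k) = ∏(1-q^{2k})². -/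
lemma gauss : thePsi * ff 1 = ff 2 * ff 2 := by
  rw [S4, S1]
  calc serHodd * ff 4 * (ff 2 * serFodd)
      = (serFodd * serHodd) * ff 4 * ff 2 := by ring
    _ = serG2 * ff 4 * ff 2 := by rw [S2]
    _ = (ff 4 * serG2) * ff 2 := by ring
    _ = ff 2 * ff 2 := by rw [← S3]




lemma tri_bound {u : ℕ} {j : ℤ} (h : 2*j^2+j = u) : -(u:ℤ) ≤ j ∧ j ≤ u := by
  constructor
  · nlinarith [sq_nonneg (j+1), sq_nonneg j]
  · nlinarith [sq_nonneg (j-1), sq_nonneg j]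

lemma pent_bound {v : ℕ} {j : ℤ} (h : j*(3*j+1) = v) : -(v:ℤ) ≤ j ∧ j ≤ v := by
  constructor
  · nlinarith [sq_nonneg (j+1), sq_nonneg j]
  · nlinarith [sq_nonneg (j-1), sq_nonneg j]

lemma triInd_of {u : ℕ} {j : ℤ} (h : 2*j^2+j = u) : triInd u = 1 := by
  rw [triInd, Finset.sum_eq_single j]
  · rw [if_pos h]
  · intro j' _ hne
    rw [if_neg (fun hc => hne (tri_uniq (hc.trans h.symm)))]
  · intro hn
    exact absurd (by simp only [mem_Icc]; exact tri_bound h) hn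

lemma pentInd_of {v : ℕ} {j : ℤ} (h : j*(3*j+1) = v) : pentInd v = (-1)^j.natAbs := by
  rw [pentInd, Finset.sum_eq_single j]
  · rw [if_pos h]
  · intro j' _ hne
    rw [if_neg (fun hc => hne (pent_uniq (hc.trans h.symm)))]
  · intro hn
    exact absurd (by simp only [mem_Icc]; exact pent_bound h) hn

lemma triInd_ne_zero {u : ℕ} (h : triInd u ≠ 0) : ∃ j : ℤ, 2*j^2+j = u := by
  obtain ⟨j, _, hj⟩ := Finset.exists_ne_zero_of_sum_ne_zero h
  by_cases hc : 2*j^2+j = (u:ℤ)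
  · exact ⟨j, hc⟩
  · rw [if_neg hc] at hj; exact absurd rfl hj

lemma pentInd_ne_zero {v : ℕ} (h : pentInd v ≠ 0) : ∃ j : ℤ, j*(3*j+1) = v := by
  obtain ⟨j, _, hj⟩ := Finset.exists_ne_zero_of_sum_ne_zero h
  by_cases hc : j*(3*j+1) = (v:ℤ)
  · exact ⟨j, hc⟩
  · rw [if_neg hc] at hj; exact absurd rfl hj




def MM (N : ℕ) : ℤ := 24*N+5

def sol (N : ℕ) : Finset (ℤ × ℤ) :=
  ((Icc (-(MM N)) (MM N)) ×ˢ (Icc (-(MM N)) (MM N))).filter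
    (fun p => 2*p.1^2 + 3*p.2^2 = MM N ∧ p.1 % 6 = 1 ∧ p.2 % 2 = 1)

def solPos (N : ℕ) : Finset (ℤ × ℤ) := (sol N).filter (fun p => 0 < p.2)

def sgn (x : ℤ) : ℤ := if x % 12 = 1 then 1 else -1

lemma mem_sol {N : ℕ} {x y : ℤ} :
    (x, y) ∈ sol N ↔ (2*x^2 + 3*y^2 = 24*(N:ℤ)+5 ∧ x % 6 = 1 ∧ y % 2 = 1) := by
  rw [sol, mem_filter]
  simp only [mem_product, mem_Icc, MM]
  constructor
  · tauto
  · rintro ⟨h1, h2, h3⟩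
    refine ⟨⟨⟨?_, ?_⟩, ?_, ?_⟩, h1, h2, h3⟩ <;>
      nlinarith [sq_nonneg (2*x-1), sq_nonneg (2*x+1), sq_nonneg (2*y-1), sq_nonneg (2*y+1),
        sq_nonneg x, sq_nonneg y]

lemma mem_solPos {N : ℕ} {x y : ℤ} :
    (x, y) ∈ solPos N ↔ ((2*x^2 + 3*y^2 = 24*(N:ℤ)+5 ∧ x % 6 = 1 ∧ y % 2 = 1) ∧ 0 < y) := by
  simp only [solPos, mem_filter, mem_sol]

lemma sgn_eq (j : ℤ) : sgn (6*j+1) = (-1)^j.natAbs := by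
  rcases Int.even_or_odd j with he | ho
  · rw [sgn, if_pos (by obtain ⟨r, rfl⟩ := he; omega),
        Even.neg_one_pow (Int.natAbs_even.mpr he)]
  · rw [sgn, if_neg (by obtain ⟨r, rfl⟩ := ho; omega),
        Odd.neg_one_pow (Int.natAbs_odd.mpr ho)]

lemma sgn_ne_zero (x : ℤ) : sgn x ≠ 0 := by
  rw [sgn]; split <;> omega

lemma y_decomp {y : ℤ} (hy : y % 2 = 1) : ∃ jy : ℤ, y^2 = 8*(2*jy^2+jy) + 1 := by
  by_cases h4 : y % 4 = 1
  · refine ⟨(y-1)/4, ?_⟩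
    obtain ⟨c, hc⟩ : ∃ c, y = 4*c+1 := ⟨(y-1)/4, by omega⟩
    rw [hc, show (4*c+1-1)/4 = c from by omega]
    ring
  · refine ⟨(-y-1)/4, ?_⟩
    obtain ⟨c, hc⟩ : ∃ c, y = 4*c+3 := ⟨(y-3)/4, by omega⟩
    rw [hc, show (-(4*c+3)-1)/4 = -(c+1) from by omega]
    ring

lemma tri_nonneg (j : ℤ) : 0 ≤ 2*j^2+j := by nlinarith [sq_nonneg (2*j+1), sq_nonneg j]
lemma pent_nonneg (j : ℤ) : 0 ≤ j*(3*j+1) := by nlinarith [sq_nonneg (2*j+1), sq_nonneg j]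

/-- value of the `B`-convolution sum as a signed solution count over `y > 0`. -/
lemma sum_solPos (N : ℕ) :
    ∑ p ∈ solPos N, sgn p.1 = ∑ p ∈ antidiagonal N, triInd p.1 * pentInd p.2 := by
  apply Finset.sum_bij_ne_zero
    (i := fun p _ _ => (((p.2^2 - 1)/8).toNat, ((p.1^2 - 1)/12).toNat))
  -- membership
  · rintro ⟨x, y⟩ hp hne
    rw [mem_solPos] at hp
    obtain ⟨⟨heq, hx6, hy2⟩, hy⟩ := hp
    obtain ⟨j, rfl⟩ : ∃ j, x = 6*j+1 := ⟨(x-1)/6, by omega⟩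
    obtain ⟨jy, hjy⟩ := y_decomp hy2
    simp only [Finset.HasAntidiagonal.mem_antidiagonal]
    have hu : (y^2 - 1)/8 = 2*jy^2+jy := by omega
    have hv : ((6*j+1)^2 - 1)/12 = j*(3*j+1) := by
      rw [show (6*j+1)^2 - 1 = 12*(j*(3*j+1)) from by ring]
      omega
    have huv : (2*jy^2+jy) + j*(3*j+1) = N := by nlinarith [hjy, heq]
    have hu0 := tri_nonneg jy
    have hv0 := pent_nonneg j
    omega
  -- injectivity
  · rintro ⟨x, y⟩ h1 hne1 ⟨x', y'⟩ h2 hne2 hij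
    rw [mem_solPos] at h1 h2
    obtain ⟨⟨heq1, hx61, hy21⟩, hy1⟩ := h1
    obtain ⟨⟨heq2, hx62, hy22⟩, hy2⟩ := h2
    simp only [Prod.mk.injEq] at hij ⊢
    obtain ⟨hiju, hijv⟩ := hij
    have hyy : y^2 = y'^2 := by
      obtain ⟨jy, hjy⟩ := y_decomp hy21
      obtain ⟨jy', hjy'⟩ := y_decomp hy22
      omega
    have hxx : x^2 = x'^2 := by
      obtain ⟨j, rfl⟩ : ∃ j, x = 6*j+1 := ⟨(x-1)/6, by omega⟩
      obtain ⟨j', rfl⟩ : ∃ j, x' = 6*j+1 := ⟨(x'-1)/6, by omega⟩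
      have e1 : (6*j+1)^2 - 1 = 12*(j*(3*j+1)) := by ring
      have e2 : (6*j'+1)^2 - 1 = 12*(j'*(3*j'+1)) := by ring
      have q1 := pent_nonneg j
      have q2 := pent_nonneg j'
      omega
    constructor
    · have h0 : (x - x') * (x + x') = 0 := by nlinarith [hxx]
      rcases mul_eq_zero.1 h0 with h|h
      · linarith
      · omega
    · nlinarith [hyy, hy1, hy2]
  -- surjectivity
  · rintro ⟨u, v⟩ huv hg
    simp only [Finset.HasAntidiagonal.mem_antidiagonal] at huv
    have ht : triInd u ≠ 0 := fun h => hg (by rw [h, zero_mul])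
    have hp : pentInd v ≠ 0 := fun h => hg (by rw [h, mul_zero])
    obtain ⟨jt, hjt⟩ := triInd_ne_zero ht
    obtain ⟨jp, hjp⟩ := pentInd_ne_zero hp
    have hsq : (((4*jt+1).natAbs : ℤ))^2 = (4*jt+1)^2 := by
      rw [← Int.abs_eq_natAbs, sq_abs]
    refine ⟨(6*jp+1, ((4*jt+1).natAbs : ℤ)), ?_, ?_, ?_⟩
    · rw [mem_solPos]
      refine ⟨⟨?_, by omega, by omega⟩, by omega⟩
      rw [hsq]
      nlinarith [hjt, hjp, huv]
    · exact sgn_ne_zero _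
    · simp only [Prod.mk.injEq]
      constructor
      · rw [hsq, show ((4*jt+1)^2 - 1)/8 = 2*jt^2+jt from by
          rw [show (4*jt+1)^2 - 1 = 8*(2*jt^2+jt) from by ring]; omega]
        omega
      · rw [show ((6*jp+1)^2 - 1)/12 = jp*(3*jp+1) from by
          rw [show (6*jp+1)^2 - 1 = 12*(jp*(3*jp+1)) from by ring]; omega]
        omega
  -- values
  · rintro ⟨x, y⟩ hp hne
    rw [mem_solPos] at hp
    obtain ⟨⟨heq, hx6, hy2⟩, hy⟩ := hp
    obtain ⟨j, rfl⟩ : ∃ j, x = 6*j+1 := ⟨(x-1)/6, by omega⟩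
    obtain ⟨jy, hjy⟩ := y_decomp hy2
    have hu : ((y^2 - 1)/8).toNat = (2*jy^2+jy).toNat := by omega
    have hv : (((6*j+1)^2 - 1)/12).toNat = (j*(3*j+1)).toNat := by
      rw [show (6*j+1)^2 - 1 = 12*(j*(3*j+1)) from by ring]
      congr 1
      omega
    have hu0 := tri_nonneg jy
    have hv0 := pent_nonneg j
    rw [hu, hv, triInd_of (j := jy) (by omega),
        pentInd_of (j := j) (by omega), one_mul, sgn_eq]

/-- doubling: sum over all `y` equals twice the sum over `y > 0`. -/
lemma sum_sol (N : ℕ) : ∑ p ∈ sol N, sgn p.1 = 2 * ∑ p ∈ solPos N, sgn p.1 := by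
  have hsplit := Finset.sum_filter_add_sum_filter_not (sol N) (fun p => 0 < p.2)
    (fun p => sgn p.1)
  have hneg : ∑ p ∈ (sol N).filter (fun p => ¬ 0 < p.2), sgn p.1
      = ∑ p ∈ solPos N, sgn p.1 := by
    apply Finset.sum_nbij' (i := fun p => (p.1, -p.2)) (j := fun p => (p.1, -p.2))
    · rintro ⟨x, y⟩ hp
      rw [mem_filter, mem_sol] at hp
      obtain ⟨⟨heq, hx6, hy2⟩, hyn⟩ := hp
      show (x, -y) ∈ solPos N
      rw [mem_solPos]
      exact ⟨⟨by nlinarith [heq], hx6, by omega⟩, by omega⟩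
    · rintro ⟨x, y⟩ hp
      rw [mem_solPos] at hp
      obtain ⟨⟨heq, hx6, hy2⟩, hyp⟩ := hp
      show (x, -y) ∈ Finset.filter (fun p => ¬ 0 < p.2) (sol N)
      rw [mem_filter, mem_sol]
      exact ⟨⟨by nlinarith [heq], hx6, by omega⟩, by omega⟩
    · rintro ⟨x, y⟩ _; simp
    · rintro ⟨x, y⟩ _; simp
    · rintro ⟨x, y⟩ _; simp
  have hfold : ∑ x ∈ Finset.filter (fun x => 0 < x.2) (sol N), sgn x.1
      = ∑ p ∈ solPos N, sgn p.1 := rfl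
  rw [← hsplit, hneg, hfold]
  ring




private lemma form_transfer {x y a b : ℤ} (ha : 11*a = 5*x+12*y) (hb : 11*b = 8*x-5*y) :
    2*a^2 + 3*b^2 = 2*x^2 + 3*y^2 := by
  have h121 : (121:ℤ) * (2*a^2+3*b^2) = 121 * (2*x^2+3*y^2) := by
    linear_combination (2*(11*a + 5*x+12*y)) * ha + (3*(11*b+8*x-5*y)) * hb
  have h : (121:ℤ) ≠ 0 := by norm_num
  exact mul_left_cancel₀ h h121

/-- the sign-reversing involution on the class `x ≡ 2y (mod 11)`. -/
lemma sum_class1 (N : ℕ) :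
    ∑ p ∈ (sol N).filter (fun p => (p.1 - 2*p.2) % 11 = 0), sgn p.1 = 0 := by
  apply Finset.sum_involution
    (g := fun p _ => ((5*p.1+12*p.2)/11, (8*p.1-5*p.2)/11))
  · rintro ⟨x, y⟩ ha
    simp only [mem_filter, mem_sol] at ha
    obtain ⟨⟨heq, hx6, hy2⟩, hc⟩ := ha
    have hda : (11:ℤ) ∣ 5*x+12*y := by omega
    have ha' : 11*((5*x+12*y)/11) = 5*x+12*y := Int.mul_ediv_cancel' hda
    have hcase : (x % 12 = 1 ∧ ((5*x+12*y)/11) % 12 = 7)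
        ∨ (x % 12 = 7 ∧ ((5*x+12*y)/11) % 12 = 1) := by omega
    show sgn x + sgn ((5*x+12*y)/11) = 0
    rcases hcase with ⟨h1, h2⟩ | ⟨h1, h2⟩ <;> simp [sgn, h1, h2]
  · rintro ⟨x, y⟩ ha _
    simp only [mem_filter, mem_sol] at ha
    obtain ⟨⟨heq, hx6, hy2⟩, hc⟩ := ha
    have hda : (11:ℤ) ∣ 5*x+12*y := by omega
    have ha' : 11*((5*x+12*y)/11) = 5*x+12*y := Int.mul_ediv_cancel' hda
    show ((5*x+12*y)/11, (8*x-5*y)/11) ≠ (x, y)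
    intro hcontra
    rw [Prod.mk.injEq] at hcontra
    obtain ⟨h1, -⟩ := hcontra
    omega
  · rintro ⟨x, y⟩ ha
    simp only [mem_filter, mem_sol] at ha
    obtain ⟨⟨heq, hx6, hy2⟩, hc⟩ := ha
    have hda : (11:ℤ) ∣ 5*x+12*y := by omega
    have hdb : (11:ℤ) ∣ 8*x-5*y := by omega
    have ha' : 11*((5*x+12*y)/11) = 5*x+12*y := Int.mul_ediv_cancel' hda
    have hb' : 11*((8*x-5*y)/11) = 8*x-5*y := Int.mul_ediv_cancel' hdb
    show ((5*((5*x+12*y)/11) + 12*((8*x-5*y)/11))/11,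
          (8*((5*x+12*y)/11) - 5*((8*x-5*y)/11))/11) = (x, y)
    rw [Prod.mk.injEq]
    constructor <;> omega
  · rintro ⟨x, y⟩ ha
    simp only [mem_filter, mem_sol] at ha
    obtain ⟨⟨heq, hx6, hy2⟩, hc⟩ := ha
    have hda : (11:ℤ) ∣ 5*x+12*y := by omega
    have hdb : (11:ℤ) ∣ 8*x-5*y := by omega
    have ha' : 11*((5*x+12*y)/11) = 5*x+12*y := Int.mul_ediv_cancel' hda
    have hb' : 11*((8*x-5*y)/11) = 8*x-5*y := Int.mul_ediv_cancel' hdb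
    show ((5*x+12*y)/11, (8*x-5*y)/11) ∈ (sol N).filter (fun p => (p.1 - 2*p.2) % 11 = 0)
    rw [mem_filter, mem_sol]
    refine ⟨⟨?_, by omega, by omega⟩, by dsimp only; omega⟩
    rw [form_transfer ha' hb']
    exact heq

/-- class 2 maps to class 1 by `y ↦ -y`. -/
lemma sum_class2 (N : ℕ) :
    ∑ p ∈ (sol N).filter (fun p => (p.1 + 2*p.2) % 11 = 0), sgn p.1 = 0 := by
  conv_rhs => rw [← sum_class1 N]
  apply Finset.sum_nbij' (i := fun p => (p.1, -p.2)) (j := fun p => (p.1, -p.2))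
  · rintro ⟨x, y⟩ hp
    rw [mem_filter, mem_sol] at hp
    obtain ⟨⟨heq, hx6, hy2⟩, hc⟩ := hp
    show (x, -y) ∈ (sol N).filter (fun p => (p.1 - 2*p.2) % 11 = 0)
    rw [mem_filter, mem_sol]
    refine ⟨⟨by nlinarith [heq], hx6, by omega⟩, ?_⟩
    dsimp only at hc ⊢
    omega
  · rintro ⟨x, y⟩ hp
    rw [mem_filter, mem_sol] at hp
    obtain ⟨⟨heq, hx6, hy2⟩, hc⟩ := hp
    show (x, -y) ∈ (sol N).filter (fun p => (p.1 + 2*p.2) % 11 = 0)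
    rw [mem_filter, mem_sol]
    refine ⟨⟨by nlinarith [heq], hx6, by omega⟩, ?_⟩
    dsimp only at hc ⊢
    omega
  · rintro ⟨x, y⟩ _; simp
  · rintro ⟨x, y⟩ _; simp
  · rintro ⟨x, y⟩ _; simp

lemma cover (n : ℕ) : sol (11*n+25)
    = ((sol (11*n+25)).filter (fun p => (p.1 - 2*p.2) % 11 = 0))
      ∪ ((sol (11*n+25)).filter (fun p => (p.1 + 2*p.2) % 11 = 0)) := by
  rw [← Finset.filter_or]
  symm
  apply Finset.filter_true_of_mem
  rintro ⟨x, y⟩ hp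
  rw [mem_sol] at hp
  obtain ⟨heq, hx6, hy2⟩ := hp
  push_cast at heq
  have hdvd : (11:ℤ) ∣ (x - 2*y) * (x + 2*y) :=
    ⟨144*(n:ℤ)+330 - x^2 - 2*y^2, by linear_combination 6*heq⟩
  have hp11 : Prime (11:ℤ) := by norm_num
  rcases hp11.dvd_mul.1 hdvd with h | h
  · left; dsimp only; omega
  · right; dsimp only; omega

lemma inter_eq (n : ℕ) :
    ((sol (11*n+25)).filter (fun p => (p.1 - 2*p.2) % 11 = 0))
      ∩ ((sol (11*n+25)).filter (fun p => (p.1 + 2*p.2) % 11 = 0))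
    = (sol (11*n+25)).filter (fun p => p.1 % 11 = 0 ∧ p.2 % 11 = 0) := by
  rw [← Finset.filter_and]
  apply Finset.filter_congr
  rintro ⟨x, y⟩ _
  dsimp only
  constructor
  · rintro ⟨h1, h2⟩; omega
  · rintro ⟨h1, h2⟩; omega

lemma Q_empty (n : ℕ) (hn : ¬ (11 ∣ n)) :
    (sol (11*n+25)).filter (fun p => p.1 % 11 = 0 ∧ p.2 % 11 = 0) = ∅ := by
  rw [Finset.filter_eq_empty_iff]
  rintro ⟨x, y⟩ hp
  rw [mem_sol] at hp
  obtain ⟨heq, hx6, hy2⟩ := hp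
  push_cast at heq
  dsimp only
  rintro ⟨h1, h2⟩
  obtain ⟨a, rfl⟩ : ∃ a, x = 11*a := ⟨x/11, by omega⟩
  obtain ⟨b, rfl⟩ : ∃ b, y = 11*b := ⟨y/11, by omega⟩
  have h121 : (121:ℤ) ∣ 24*(11*(n:ℤ)+25)+5 := ⟨2*a^2+3*b^2, by linear_combination -heq⟩
  have : (11:ℤ) ∣ (n:ℤ) := by omega
  exact hn (by exact_mod_cast this)

lemma Q_descent (m : ℕ) :
    ∑ p ∈ (sol (11*(11*m)+25)).filter (fun p => p.1 % 11 = 0 ∧ p.2 % 11 = 0), sgn p.1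
      = ∑ p ∈ sol m, sgn p.1 := by
  apply Finset.sum_nbij' (i := fun p => (-(p.1/11), p.2/11))
    (j := fun p => (-(11*p.1), 11*p.2))
  · rintro ⟨x, y⟩ hp
    rw [mem_filter, mem_sol] at hp
    obtain ⟨⟨heq, hx6, hy2⟩, hx11, hy11⟩ := hp
    push_cast at heq
    obtain ⟨a, rfl⟩ : ∃ a, x = 11*a := ⟨x/11, by omega⟩
    obtain ⟨b, rfl⟩ : ∃ b, y = 11*b := ⟨y/11, by omega⟩
    show (-(11*a/11), 11*b/11) ∈ sol m
    rw [show (11*a/11 : ℤ) = a from by omega, show (11*b/11 : ℤ) = b from by omega, mem_sol]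
    refine ⟨?_, by omega, by omega⟩
    have h121 : (121:ℤ) * (2*(-a)^2+3*b^2) = 121 * (24*(m:ℤ)+5) := by linear_combination heq
    have h : (121:ℤ) ≠ 0 := by norm_num
    exact mul_left_cancel₀ h h121
  · rintro ⟨a, b⟩ hp
    rw [mem_sol] at hp
    obtain ⟨heq, ha6, hb2⟩ := hp
    show (-(11*a), 11*b) ∈ (sol (11*(11*m)+25)).filter (fun p => p.1 % 11 = 0 ∧ p.2 % 11 = 0)
    rw [mem_filter, mem_sol]
    refine ⟨⟨?_, by omega, by omega⟩, by dsimp only; omega⟩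
    push_cast
    linear_combination 121*heq
  · rintro ⟨x, y⟩ hp
    rw [mem_filter, mem_sol] at hp
    obtain ⟨⟨heq, hx6, hy2⟩, hx11, hy11⟩ := hp
    show (-(11*(-(x/11))), 11*(y/11)) = (x, y)
    rw [Prod.mk.injEq]
    constructor <;> omega
  · rintro ⟨a, b⟩ hp
    show (-(-(11*a)/11), 11*b/11) = (a, b)
    rw [Prod.mk.injEq]
    constructor <;> omega
  · rintro ⟨x, y⟩ hp
    rw [mem_filter, mem_sol] at hp
    obtain ⟨⟨heq, hx6, hy2⟩, hx11, hy11⟩ := hp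
    show sgn x = sgn (-(x/11))
    obtain ⟨a, rfl⟩ : ∃ a, x = 11*a := ⟨x/11, by omega⟩
    rw [show ((11*a)/11 : ℤ) = a from by omega]
    have hiff : (11*a) % 12 = 1 ↔ (-a) % 12 = 1 := by omega
    rw [sgn, sgn, if_congr hiff rfl rfl]

/-- THE FINALE. -/
lemma finale (n : ℕ) : ∑ p ∈ sol (11*n+25), sgn p.1
    = if 11 ∣ n then -∑ p ∈ sol (n/11), sgn p.1 else 0 := by
  have hkey := Finset.sum_union_inter (s₁ := (sol (11*n+25)).filter (fun p => (p.1 - 2*p.2) % 11 = 0))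
    (s₂ := (sol (11*n+25)).filter (fun p => (p.1 + 2*p.2) % 11 = 0)) (f := fun p => sgn p.1)
  rw [← cover n, sum_class1, sum_class2, inter_eq] at hkey
  by_cases hn : 11 ∣ n
  · obtain ⟨m, rfl⟩ := hn
    rw [if_pos ⟨m, rfl⟩, show 11*m/11 = m from by omega]
    rw [Q_descent m] at hkey
    linarith
  · rw [Q_empty n hn] at hkey
    rw [if_neg hn]
    simpa using hkey


end AuxJTP

/-- `f m` is the formal power series `∏_{k ≥ 1} (1 - q^{m k})` (for `m ≥ 1`),
realized via the fact that its `n`-th coefficient equals that of the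
finite product `∏_{k=1}^{n} (1 - q^{m k})`. -/
noncomputable def f (m : ℕ) : PowerSeries ℤ :=
  PowerSeries.mk fun n =>
    PowerSeries.coeff n (∏ k ∈ Finset.Icc 1 n, (1 - (PowerSeries.X : PowerSeries ℤ) ^ (m * k)))

noncomputable section Glue

lemma f_eq_ff (m : ℕ) : f m = ff m := by
  unfold f ff PF
  congr 1

lemma ff1_ne : ff 1 ≠ 0 := by
  intro h
  have h1 : PowerSeries.coeff 0 (ff 1) = 1 := by
    rw [ff, PF, PowerSeries.coeff_mk]
    simp
  rw [h] at h1
  simp at h1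

lemma B_eq {B : PowerSeries ℤ} (hB : B * f 1 = (f 2) ^ 3) : B = thePsi * ff 2 := by
  apply mul_right_cancel₀ ff1_ne
  rw [f_eq_ff, f_eq_ff] at hB
  calc B * ff 1 = ff 2 ^ 3 := hB
    _ = (ff 2 * ff 2) * ff 2 := by ring
    _ = (thePsi * ff 1) * ff 2 := by rw [gauss]
    _ = thePsi * ff 2 * ff 1 := by ring

lemma coeffB {B : PowerSeries ℤ} (hB : B * f 1 = (f 2) ^ 3) (N : ℕ) :
    PowerSeries.coeff N B = ∑ p ∈ antidiagonal N, triInd p.1 * pentInd p.2 := by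
  rw [B_eq hB, S5, PowerSeries.coeff_mul]
  apply Finset.sum_congr rfl
  intro p _
  rw [thePsi, PowerSeries.coeff_mk, PowerSeries.coeff_mk]

lemma twice_coeffB {B : PowerSeries ℤ} (hB : B * f 1 = (f 2) ^ 3) (N : ℕ) :
    2 * PowerSeries.coeff N B = ∑ p ∈ sol N, sgn p.1 := by
  rw [sum_sol, sum_solPos, coeffB hB]

end Glue

/-- With `∑ b(n) q^n = f_2^3 / f_1`, we have `b(11n+25) = -b(n/11)`,
interpreted as `0` when `11 ∤ n`. -/
theorem b_eleven_dissection (B : PowerSeries ℤ) (hB : B * f 1 = (f 2) ^ 3) (n : ℕ) :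
    PowerSeries.coeff (11 * n + 25) B =
      if 11 ∣ n then -(PowerSeries.coeff (n / 11) B) else 0 := by
  have h1 := twice_coeffB hB (11*n+25)
  have h2 := finale n
  by_cases hn : 11 ∣ n
  · rw [if_pos hn] at h2 ⊢
    have h3 := twice_coeffB hB (n/11)
    linarith
  · rw [if_neg hn] at h2 ⊢
    linarith
end

section
/- For every integer c ≥ 0, a_{49c+5}(3) ≡ 0 (mod 7). -/
open PowerSeries

lemma cf (m n : ℕ) : coeff n (f m) =
    coeff n (∏ k ∈ Finset.Icc 1 n, (1 - (X : PowerSeries ℤ) ^ (m * k))) := by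
  simp [f]

lemma mul3 (a b : PowerSeries ℤ) : coeff 3 (a * b) =
    coeff 0 a * coeff 3 b + coeff 1 a * coeff 2 b +
    coeff 2 a * coeff 1 b + coeff 3 a * coeff 0 b := by
  rw [coeff_mul, Finset.Nat.sum_antidiagonal_eq_sum_range_succ_mk]
  simp [Finset.sum_range_succ]

lemma mul2 (a b : PowerSeries ℤ) : coeff 2 (a * b) =
    coeff 0 a * coeff 2 b + coeff 1 a * coeff 1 b + coeff 2 a * coeff 0 b := by
  rw [coeff_mul, Finset.Nat.sum_antidiagonal_eq_sum_range_succ_mk]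
  simp [Finset.sum_range_succ]

lemma mul1 (a b : PowerSeries ℤ) : coeff 1 (a * b) =
    coeff 0 a * coeff 1 b + coeff 1 a * coeff 0 b := by
  rw [coeff_mul, Finset.Nat.sum_antidiagonal_eq_sum_range_succ_mk]
  simp [Finset.sum_range_succ]

lemma mul0 (a b : PowerSeries ℤ) : coeff 0 (a * b) =
    coeff 0 a * coeff 0 b := by
  rw [coeff_mul, Finset.Nat.sum_antidiagonal_eq_sum_range_succ_mk]
  simp

lemma f1_0 : coeff 0 (f 1) = 1 := by rw [cf]; simp
lemma f1_1 : coeff 1 (f 1) = -1 := by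
  rw [cf, show (Finset.Icc 1 1 : Finset ℕ) = {1} from rfl, Finset.prod_singleton]
  simp [coeff_X]
lemma f1_2 : coeff 2 (f 1) = -1 := by
  rw [cf, show (Finset.Icc 1 2 : Finset ℕ) = {1,2} from rfl,
    Finset.prod_insert (by decide), Finset.prod_singleton]
  ring_nf
  simp [coeff_X_pow, coeff_X, coeff_one]
lemma f1_3 : coeff 3 (f 1) = 0 := by
  rw [cf, show (Finset.Icc 1 3 : Finset ℕ) = {1,2,3} from rfl,
    Finset.prod_insert (by decide), Finset.prod_insert (by decide), Finset.prod_singleton]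
  ring_nf
  simp [coeff_X_pow, coeff_X, coeff_one]

lemma f2_0 : coeff 0 (f 2) = 1 := by rw [cf]; simp
lemma f2_1 : coeff 1 (f 2) = 0 := by
  rw [cf, show (Finset.Icc 1 1 : Finset ℕ) = {1} from rfl, Finset.prod_singleton]
  simp [coeff_X_pow]
lemma f2_2 : coeff 2 (f 2) = -1 := by
  rw [cf, show (Finset.Icc 1 2 : Finset ℕ) = {1,2} from rfl,
    Finset.prod_insert (by decide), Finset.prod_singleton]
  ring_nf
  simp [coeff_X_pow, coeff_one]
lemma f2_3 : coeff 3 (f 2) = 0 := by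
  rw [cf, show (Finset.Icc 1 3 : Finset ℕ) = {1,2,3} from rfl,
    Finset.prod_insert (by decide), Finset.prod_insert (by decide), Finset.prod_singleton]
  ring_nf
  simp [coeff_X_pow, coeff_one]

lemma f2pow (m : ℕ) : coeff 0 (f 2 ^ m) = 1 ∧ coeff 1 (f 2 ^ m) = 0 ∧
    coeff 2 (f 2 ^ m) = -(m : ℤ) ∧ coeff 3 (f 2 ^ m) = 0 := by
  induction m with
  | zero => simp [coeff_one]
  | succ m ih =>
    obtain ⟨h0, h1, h2, h3⟩ := ih
    rw [pow_succ]
    refine ⟨?_, ?_, ?_, ?_⟩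
    · rw [mul0, h0, f2_0]; ring
    · rw [mul1, h0, h1, f2_0, f2_1]; ring
    · rw [mul2, h0, h1, h2, f2_0, f2_1, f2_2]; push_cast; ring
    · rw [mul3, h0, h1, h2, h3, f2_0, f2_1, f2_2, f2_3]; ring

/-- For every integer `c ≥ 0`, `a_{49c+5}(3) ≡ 0 (mod 7)`, where
`∑ a_c(n) q^n = 1/(f_1 f_2^{c-1})`. -/
theorem a_49c5_three_mod7 (c : ℕ) (A : PowerSeries ℤ)
    (hA : A * (f 1 * (f 2) ^ (49 * c + 4)) = 1) :
    (7 : ℤ) ∣ PowerSeries.coeff 3 A := by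
  set m : ℕ := 49 * c + 4 with hm
  set B : PowerSeries ℤ := f 1 * f 2 ^ m with hB
  obtain ⟨p0, p1, p2, p3⟩ := f2pow m
  have hb0 : coeff 0 B = 1 := by rw [hB, mul0, f1_0, p0]; ring
  have hb1 : coeff 1 B = -1 := by rw [hB, mul1, f1_0, f1_1, p0, p1]; ring
  have hb2 : coeff 2 B = -1 - (m : ℤ) := by
    rw [hB, mul2, f1_0, f1_1, f1_2, p0, p1, p2]; ring
  have hb3 : coeff 3 B = (m : ℤ) := by
    rw [hB, mul3, f1_0, f1_1, f1_2, f1_3, p0, p1, p2, p3]; ring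
  have e0 : coeff 0 (A * B) = 1 := by rw [hA]; simp [coeff_one]
  have e1 : coeff 1 (A * B) = 0 := by rw [hA]; simp [coeff_one]
  have e2 : coeff 2 (A * B) = 0 := by rw [hA]; simp [coeff_one]
  have e3 : coeff 3 (A * B) = 0 := by rw [hA]; simp [coeff_one]
  rw [mul0, hb0] at e0
  rw [mul1, hb0, hb1] at e1
  rw [mul2, hb0, hb1, hb2] at e2
  rw [mul3, hb0, hb1, hb2, hb3] at e3
  have ha0 : coeff 0 A = 1 := by linarith
  have ha1 : coeff 1 A = 1 := by
    rw [ha0] at e1; linarith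
  have ha2 : coeff 2 A = (m : ℤ) + 2 := by
    rw [ha0, ha1] at e2; linarith
  have ha3 : coeff 3 A = (m : ℤ) + 3 := by
    rw [ha0, ha1, ha2] at e3; linarith
  rw [ha3, hm]
  push_cast
  exact ⟨7 * c + 1, by ring⟩
end
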